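/- Every connected simple graph on 6 vertices having a unique perfect matching has a nonsingular adjacency matrix; i.e., the determinant of its adjacency matrix (over ℚ, equivalently ℤ) is nonzero. -/

import Mathlib

set_option maxRecDepth 2000

/-- A simple graph has a unique perfect matching (unique 1-factor) if there is
exactly one perfect matching. -/
def HasUniquePM {V : Type*} (G : SimpleGraph V) : Prop :=
  ∃! M : G.Subgraph, M.IsPerfectMatching

open Finset Equiv

/-- A unique perfect matching yields a unique fixed-point-free involutive
permutation all of whose edges lie in `G` (fixed-point-freeness is automatic
from adjacency). -/
lemma upm_perm {V : Type*} (G : SimpleGraph V) (hm : HasUniquePM G) :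
    ∃! σ : Equiv.Perm V, Function.Involutive ⇑σ ∧ ∀ i, G.Adj i (σ i) := by
  obtain ⟨M, hM, huniq⟩ := hm
  have hM' := SimpleGraph.Subgraph.isPerfectMatching_iff.mp hM
  -- define the matching function
  set g : V → V := fun v => (hM' v).choose with hg
  have spec1 : ∀ v, M.Adj v (g v) := fun v => (hM' v).choose_spec.1
  have spec2 : ∀ v y, M.Adj v y → y = g v := fun v => (hM' v).choose_spec.2
  have hinv : Function.Involutive g := fun v => (spec2 (g v) v (M.adj_symm (spec1 v))).symm
  -- subgraph associated to a permutation
  have build : ∀ σ : Equiv.Perm V, Function.Involutive ⇑σ → (∀ i, G.Adj i (σ i)) →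
      ∀ v, M.Adj v (σ v) := by
    intro σ hσ hPσ
    set Mσ : G.Subgraph :=
      { verts := Set.univ
        Adj := fun x y => G.Adj x y ∧ σ x = y
        adj_sub := fun h => h.1
        edge_vert := fun _ => trivial
        symm := ⟨by rintro x y ⟨h, rfl⟩; exact ⟨h.symm, hσ x⟩⟩ } with hMσ
    have hPM : Mσ.IsPerfectMatching := by
      rw [SimpleGraph.Subgraph.isPerfectMatching_iff]
      intro v
      exact ⟨σ v, ⟨hPσ v, rfl⟩, fun y hy => hy.2.symm⟩
    have hEq : Mσ = M := huniq Mσ hPM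
    intro v
    have : Mσ.Adj v (σ v) := ⟨hPσ v, rfl⟩
    rwa [hEq] at this
  refine ⟨hinv.toPerm, ⟨hinv, fun i => M.adj_sub (spec1 i)⟩, ?_⟩
  rintro σ ⟨hσ, hPσ⟩
  ext v
  exact spec2 v (σ v) (build σ hσ hPσ v)

/-- mod 2, the determinant of the adjacency matrix counts perfect matchings. -/
lemma det_adj_two {V : Type*} [Fintype V] [DecidableEq V] (G : SimpleGraph V)
    [DecidableRel G.Adj] (hm : HasUniquePM G) : (G.adjMatrix (ZMod 2)).det = 1 := by
  have hneg : ∀ x : ZMod 2, -x = x := by decide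
  have hadd : ∀ x : ZMod 2, x + x = 0 := by decide
  set A := G.adjMatrix (ZMod 2) with hA
  set F : Equiv.Perm V → ZMod 2 := fun σ => ∏ i, A (σ i) i with hF
  have hdet : A.det = ∑ σ : Equiv.Perm V, F σ := by
    rw [Matrix.det_apply]
    refine Finset.sum_congr rfl fun σ _ => ?_
    rcases Int.units_eq_one_or (Equiv.Perm.sign σ) with h | h <;> rw [h]
    · rw [one_smul]
    · rw [Units.neg_smul, one_smul, hneg]
  -- F is invariant under inversion
  have hFinv : ∀ σ : Equiv.Perm V, F σ⁻¹ = F σ := by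
    intro σ
    have h1 : ∀ j : V, A (σ⁻¹ (σ j)) (σ j) = A (σ j) j := by
      intro j
      rw [show σ⁻¹ (σ j) = j from σ.symm_apply_apply j, hA]
      by_cases h : G.Adj (σ j) j
      · rw [SimpleGraph.adjMatrix_apply, SimpleGraph.adjMatrix_apply,
          if_pos h.symm, if_pos h]
      · rw [SimpleGraph.adjMatrix_apply, SimpleGraph.adjMatrix_apply,
          if_neg (fun h' => h h'.symm), if_neg h]
    calc F σ⁻¹ = ∏ i, A (σ⁻¹ i) i := rfl
      _ = ∏ j, A (σ⁻¹ (σ j)) (σ j) := (Equiv.prod_comp σ (fun i => A (σ⁻¹ i) i)).symm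
      _ = ∏ j, A (σ j) j := Finset.prod_congr rfl fun j _ => h1 j
      _ = F σ := rfl
  obtain ⟨σ₀, ⟨hσ₀inv, hσ₀P⟩, huniq⟩ := upm_perm G hm
  have hσ₀mem : σ₀ ∈ Finset.univ.filter (fun σ : Equiv.Perm V => σ⁻¹ = σ) := by
    simp only [Finset.mem_filter, Finset.mem_univ, true_and]
    ext v
    rw [Equiv.Perm.inv_eq_iff_eq]
    exact (hσ₀inv v).symm
  have hsum1 : ∑ σ ∈ Finset.univ.filter (fun σ : Equiv.Perm V => σ⁻¹ = σ), F σ = 1 := by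
    rw [Finset.sum_eq_single_of_mem σ₀ hσ₀mem]
    · refine Finset.prod_eq_one fun i _ => ?_
      rw [hA, SimpleGraph.adjMatrix_apply, if_pos (hσ₀P i).symm]
    · intro σ hσmem hne
      by_contra hF0
      have hinv : Function.Involutive ⇑σ := by
        intro v
        have h := (Finset.mem_filter.mp hσmem).2
        nth_rewrite 1 [← h]
        exact σ.symm_apply_apply v
      have hPσ : ∀ i, G.Adj i (σ i) := by
        intro i
        have h : A (σ i) i ≠ 0 := by
          intro h0
          exact hF0 (Finset.prod_eq_zero (Finset.mem_univ i) h0)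
        rw [hA, SimpleGraph.adjMatrix_apply] at h
        by_cases hadj : G.Adj (σ i) i
        · exact hadj.symm
        · exact absurd (if_neg hadj) h
      exact hne (huniq σ ⟨hinv, hPσ⟩)
  have hsum2 : ∑ σ ∈ Finset.univ.filter (fun σ : Equiv.Perm V => ¬σ⁻¹ = σ), F σ = 0 := by
    refine Finset.sum_involution (fun σ _ => σ⁻¹) ?_ ?_ ?_ ?_
    · intro σ _
      rw [hFinv σ, hadd]
    · intro σ hσ _
      exact (Finset.mem_filter.mp hσ).2
    · intro σ hσ
      have h2 := (Finset.mem_filter.mp hσ).2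
      refine Finset.mem_filter.mpr ⟨Finset.mem_univ _, ?_⟩
      rw [inv_inv]
      intro h
      exact h2 h.symm
    · intro σ _
      exact inv_inv σ
  rw [hdet, ← Finset.sum_filter_add_sum_filter_not Finset.univ
    (fun σ : Equiv.Perm V => σ⁻¹ = σ) F, hsum1, hsum2, add_zero]

/-- every connected simple graph on 6 vertices with a unique perfect
matching has nonsingular adjacency matrix. -/
theorem stmt8 (G : SimpleGraph (Fin 6)) [DecidableRel G.Adj]
    (hc : G.Connected) (hm : HasUniquePM G) :
    (G.adjMatrix ℤ).det ≠ 0 := by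
  intro h0
  have hmap : (G.adjMatrix ℤ).map ⇑(Int.castRingHom (ZMod 2)) = G.adjMatrix (ZMod 2) := by
    ext i j
    rw [Matrix.map_apply, SimpleGraph.adjMatrix_apply, SimpleGraph.adjMatrix_apply]
    by_cases h : G.Adj i j
    · rw [if_pos h, if_pos h, map_one]
    · rw [if_neg h, if_neg h, map_zero]
  have h1 := RingHom.map_det (Int.castRingHom (ZMod 2)) (G.adjMatrix ℤ)
  rw [h0] at h1
  rw [RingHom.mapMatrix_apply] at h1
  simp only [hmap] at h1
  rw [det_adj_two G hm] at h1
  rw [map_zero] at h1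
  exact zero_ne_one h1
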